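/- For every a ∈ ℚ_q and every nonnegative integer i, a ≡ Σ_{ℓ=0}^{−v_p(a)+i} p^{−ℓ} Ψ_q(p^ℓ a)^{q^ℓ} (mod p^{i+1} ℤ_q). -/

import Mathlib

open PowerSeries

/-- `Ψ ∈ T + T²ℤ[[T]]` satisfies `∑_{j≥0} p^{-j} Ψ(p^j T)^{q^j} = T` (coefficientwise). -/
def IsPsi (p q : ℕ) (Ψ : PowerSeries ℤ) : Prop :=
  PowerSeries.constantCoeff Ψ = 0 ∧ PowerSeries.coeff 1 Ψ = 1 ∧
  ∀ n : ℕ,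
    (∑ j ∈ Finset.range (n + 1),
      ((p : ℚ) ^ j)⁻¹ *
        PowerSeries.coeff n
          ((PowerSeries.rescale ((p : ℚ) ^ j) (Ψ.map (Int.castRingHom ℚ))) ^ (q ^ j)))
      = PowerSeries.coeff n (PowerSeries.X : PowerSeries ℚ)

/-- Evaluation of the entire function defined by an integral power series at a point of a
complete nonarchimedean field. -/
noncomputable def psiEval (Ψ : PowerSeries ℤ) {K : Type} [NormedField K] (x : K) : K :=
  ∑' i : ℕ, ((PowerSeries.coeff i Ψ : ℤ) : K) * x ^ i

section AuxLemmas

lemma nat_le_pow_self (q s : ℕ) (hq : 2 ≤ q) : s ≤ q ^ s :=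
  (Nat.lt_two_pow_self (n := s)).le.trans (Nat.pow_le_pow_left hq s)

lemma exp_key (q t J n : ℕ) (hq : 2 ≤ q) (ht : 1 ≤ t) (hn : 1 ≤ n) :
    -((t:ℤ) * ((n:ℤ) - 1)) + (q:ℤ)^t * (((J-t:ℕ):ℤ) * (q:ℤ)^(J-t) + ((J-t:ℕ):ℤ))
        - ((J-t:ℕ):ℤ) * n
      ≤ (J:ℤ) * (q:ℤ)^J + J - J * n := by
  have hn1 : (1:ℤ) ≤ (n:ℤ) := by exact_mod_cast hn
  have ht1 : (1:ℤ) ≤ (t:ℤ) := by exact_mod_cast ht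
  rcases le_or_gt J t with h | h
  · have hJt : J - t = 0 := by omega
    rw [hJt]
    have hJle : (J:ℤ) ≤ (t:ℤ) := by exact_mod_cast h
    have h1 : (J:ℤ) * ((n:ℤ) - 1) ≤ (t:ℤ) * ((n:ℤ)-1) :=
      mul_le_mul_of_nonneg_right hJle (by linarith)
    have h2 : (0:ℤ) ≤ (J:ℤ) * (q:ℤ)^J := by positivity
    push_cast
    nlinarith
  · set s := J - t with hs
    have hJ : J = s + t := by omega
    have hs1 : 1 ≤ s := by omega
    have hs1' : (1:ℤ) ≤ (s:ℤ) := by exact_mod_cast hs1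
    have hqs : (s:ℤ) ≤ (q:ℤ)^s := by exact_mod_cast nat_le_pow_self q s hq
    have hqt0 : (0:ℤ) ≤ (q:ℤ)^t := by positivity
    have hqst0 : (0:ℤ) ≤ (q:ℤ)^s * (q:ℤ)^t := by positivity
    have key : (s:ℤ) * (q:ℤ)^t ≤ (q:ℤ)^s * (q:ℤ)^t := mul_le_mul_of_nonneg_right hqs hqt0
    have key2 : (q:ℤ)^s * (q:ℤ)^t ≤ (t:ℤ) * ((q:ℤ)^s * (q:ℤ)^t) := le_mul_of_one_le_left hqst0 ht1
    rw [hJ]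
    rw [pow_add] at *
    push_cast
    nlinarith

lemma exp_key2 (q N i ℓ n : ℕ) (hq2 : 2 ≤ q) (hl : N + i + 1 ≤ ℓ) (hn : q ^ ℓ ≤ n) :
    ((N:ℤ)) * n + (i + 1) ≤ (ℓ:ℤ) * ((n:ℤ) - 1) := by
  have h2l : ℓ < 2 ^ ℓ := Nat.lt_two_pow_self
  have h2q : 2 ^ ℓ ≤ q ^ ℓ := Nat.pow_le_pow_left hq2 ℓ
  have hln : ℓ + 1 ≤ n := by omega
  have ha : (N:ℤ) + i + 1 ≤ (ℓ:ℤ) := by exact_mod_cast hl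
  have hb : (ℓ:ℤ) ≤ (n:ℤ) - 1 := by
    have : (ℓ:ℤ) + 1 ≤ (n:ℤ) := by exact_mod_cast hln
    linarith
  have hu : (0:ℤ) ≤ (n:ℤ) - 1 := by linarith
  nlinarith [mul_le_mul_of_nonneg_right ha hu, mul_le_mul_of_nonneg_right hb hu]

/-- The integral coefficient identity satisfied by `Ψ`. -/
theorem psi_int_identity (p q : ℕ) (hp : p.Prime) (Ψ : PowerSeries ℤ) (hΨ : IsPsi p q Ψ)
    (n : ℕ) (hn : 1 ≤ n) :
    (∑ j ∈ Finset.range (n + 1), (p : ℤ) ^ (j * (n - 1)) * coeff n (Ψ ^ (q ^ j)))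
      = if n = 1 then 1 else 0 := by
  obtain ⟨m, rfl⟩ : ∃ m, n = m + 1 := ⟨n - 1, by omega⟩
  have h := hΨ.2.2 (m + 1)
  have hp0 : (p : ℚ) ≠ 0 := Nat.cast_ne_zero.mpr hp.pos.ne'
  have key : ∀ j : ℕ,
      ((p : ℚ) ^ j)⁻¹ *
        PowerSeries.coeff (m+1)
          ((PowerSeries.rescale ((p : ℚ) ^ j) (Ψ.map (Int.castRingHom ℚ))) ^ (q ^ j))
      = ((p : ℤ) ^ (j * (m + 1 - 1)) * coeff (m+1) (Ψ ^ (q ^ j)) : ℤ) := by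
    intro j
    rw [← map_pow (rescale ((p:ℚ)^j)), coeff_rescale, ← map_pow (PowerSeries.map _),
      PowerSeries.coeff_map]
    have : ((p : ℚ) ^ j) ^ (m+1) = (p : ℚ) ^ j * (p:ℚ) ^ (j * (m + 1 - 1)) := by
      rw [← pow_add, ← pow_mul]
      congr 1
      simp
      ring
    rw [this]
    simp only [eq_intCast]
    push_cast
    field_simp
  rw [Finset.sum_congr rfl (fun j _ => key j)] at h
  rw [coeff_X] at h
  rw [← Int.cast_sum] at h
  have hrhs : (if m + 1 = 1 then (1:ℚ) else 0)
      = (((if m + 1 = 1 then (1:ℤ) else 0) : ℤ) : ℚ) := by split <;> simp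
  rw [hrhs] at h
  exact_mod_cast h

lemma coeff_pow_eq_zero_of_lt (Ψ : PowerSeries ℤ) (hc0 : constantCoeff Ψ = 0)
    {n m : ℕ} (hn : n < m) : coeff n (Ψ ^ m) = 0 := by
  have : (X : PowerSeries ℤ) ^ m ∣ Ψ ^ m := pow_dvd_pow_of_dvd (X_dvd_iff.mpr hc0) m
  exact (X_pow_dvd_iff.mp this) n hn

lemma psi_pow_coeff_bound (p q : ℕ) (hp : 1 < p) (K : Type) [NormedField K]
    [IsUltrametricDist K] (hpK : ‖(p : K)‖ = (p : ℝ)⁻¹)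
    (Ψ : PowerSeries ℤ) (hc0 : constantCoeff Ψ = 0) (J : ℕ) :
    ∀ m n : ℕ,
    (∀ k < n, ‖((coeff k Ψ : ℤ) : K)‖ ≤ (p : ℝ) ^ ((J * q ^ J + J : ℤ) - J * k)) →
    ‖((coeff n (Ψ ^ (m + 2)) : ℤ) : K)‖ ≤
      (p : ℝ) ^ (((m : ℤ) + 2) * (J * q ^ J + J) - J * n) := by
  have hpR : (1:ℝ) < (p:ℝ) := by exact_mod_cast hp
  have hp0 : (0:ℝ) < (p:ℝ) := by linarith
  intro m
  induction m with
  | zero =>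
    intro n hyp
    rw [pow_two, coeff_mul]
    push_cast
    apply IsUltrametricDist.norm_sum_le_of_forall_le_of_nonneg (zpow_pos hp0 _).le
    intro x hx
    have hx' : x.1 + x.2 = n := Finset.HasAntidiagonal.mem_antidiagonal.mp hx
    by_cases h1 : x.1 < n ∧ x.2 < n
    · rw [norm_mul]
      calc ‖((coeff x.1 Ψ : ℤ) : K)‖ * ‖((coeff x.2 Ψ : ℤ) : K)‖
          ≤ (p:ℝ) ^ ((J * q ^ J + J : ℤ) - J * x.1) * (p:ℝ) ^ ((J * q ^ J + J : ℤ) - J * x.2) := by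
            apply mul_le_mul (hyp _ h1.1) (hyp _ h1.2) (norm_nonneg _) (zpow_pos hp0 _).le
        _ ≤ (p:ℝ) ^ (((0:ℤ) + 2) * (J * q ^ J + J) - J * n) := by
            rw [← zpow_add₀ (ne_of_gt hp0)]
            apply zpow_le_zpow_right₀ hpR.le
            have : (J:ℤ) * n = J * x.1 + J * x.2 := by
              have : ((x.1 : ℤ) + x.2) = n := by exact_mod_cast hx'
              rw [← this]; ring
            linarith
    · have : coeff x.1 Ψ * coeff x.2 Ψ = 0 := by
        rcases not_and_or.mp h1 with h | h
        · have : x.2 = 0 := by omega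
          rw [this, coeff_zero_eq_constantCoeff, hc0, mul_zero]
        · have : x.1 = 0 := by omega
          rw [this, coeff_zero_eq_constantCoeff, hc0, zero_mul]
      rw [← Int.cast_mul, this]
      simpa using (zpow_pos hp0 _).le
  | succ m ih =>
    intro n hyp
    have hstep : Ψ ^ (m + 1 + 2) = Ψ * Ψ ^ (m + 2) := by ring
    rw [hstep, coeff_mul]
    push_cast
    apply IsUltrametricDist.norm_sum_le_of_forall_le_of_nonneg (zpow_pos hp0 _).le
    intro x hx
    have hx' : x.1 + x.2 = n := Finset.HasAntidiagonal.mem_antidiagonal.mp hx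
    by_cases h1 : x.1 < n
    · rw [norm_mul]
      have h2 := ih x.2 (fun k hk => hyp k (by omega))
      calc ‖((coeff x.1 Ψ : ℤ) : K)‖ * ‖((coeff x.2 (Ψ ^ (m+2)) : ℤ) : K)‖
          ≤ (p:ℝ) ^ ((J * q ^ J + J : ℤ) - J * x.1) *
            (p:ℝ) ^ (((m : ℤ) + 2) * (J * q ^ J + J) - J * x.2) := by
            apply mul_le_mul (hyp _ h1) h2 (norm_nonneg _) (zpow_pos hp0 _).le
        _ ≤ (p:ℝ) ^ (((m:ℤ) + 1 + 2) * (J * q ^ J + J) - J * n) := by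
            rw [← zpow_add₀ (ne_of_gt hp0)]
            apply zpow_le_zpow_right₀ hpR.le
            have : (J:ℤ) * n = J * x.1 + J * x.2 := by
              have : ((x.1 : ℤ) + x.2) = n := by exact_mod_cast hx'
              rw [← this]; ring
            linarith
    · have hx2 : x.2 = 0 := by omega
      have : coeff x.2 (Ψ ^ (m + 2)) = 0 := by
        rw [hx2, coeff_zero_eq_constantCoeff, map_pow, hc0]
        simp
      rw [this]
      simpa using (zpow_pos hp0 _).le

theorem psi_coeff_norm_bound (p q : ℕ) (Ψ : PowerSeries ℤ) (K : Type) [NormedField K]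
    (hp : p.Prime) (hq2 : 2 ≤ q)
    [IsUltrametricDist K] (hpK : ‖(p : K)‖ = (p : ℝ)⁻¹)
    (hΨ : IsPsi p q Ψ) :
    ∀ n J : ℕ, ‖((coeff n Ψ : ℤ) : K)‖ ≤ (p : ℝ) ^ ((J * q ^ J + J : ℤ) - J * n) := by
  obtain ⟨hc0, hc1, hΨid⟩ := hΨ
  have hpR : (1:ℝ) < (p:ℝ) := by exact_mod_cast hp.one_lt
  have hp0 : (0:ℝ) < (p:ℝ) := by linarith
  have hpK0 : (p:K) ≠ 0 := by
    intro h
    rw [h, norm_zero] at hpK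
    exact absurd hpK.symm (by positivity)
  have hnormpow : ∀ s : ℕ, ‖(p:K)^s‖ = (p:ℝ) ^ (-(s:ℤ)) := by
    intro s
    rw [norm_pow, hpK, inv_pow, ← zpow_natCast, ← zpow_neg]
  intro n
  induction n using Nat.strong_induction_on with
  | _ n IH =>
    intro J
    match n, IH with
    | 0, _ => simp [coeff_zero_eq_constantCoeff, hc0]; positivity
    | 1, _ =>
      rw [hc1]
      simp only [Int.cast_one, norm_one]
      apply one_le_zpow₀ hpR.le
      have h0 : (0:ℤ) ≤ (J:ℤ) * (q:ℤ)^J := by positivity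
      push_cast
      linarith
    | (n+2), IH =>
      have hid := psi_int_identity p q hp Ψ ⟨hc0, hc1, hΨid⟩ (n+2) (by omega)
      -- split off j = 0 term
      rw [Finset.sum_range_succ'] at hid
      simp only [zero_mul, pow_zero, one_mul, pow_zero] at hid
      rw [pow_one, if_neg (by omega)] at hid
      have hcn : coeff (n+2) Ψ
          = -(∑ j ∈ Finset.range (n+2), (p:ℤ) ^ ((j+1) * (n+2-1)) * coeff (n+2) (Ψ ^ q ^ (j+1))) := by
        linarith [hid]
      rw [hcn]
      push_cast
      rw [norm_neg]
      apply IsUltrametricDist.norm_sum_le_of_forall_le_of_nonneg (zpow_pos hp0 _).le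
      intro j _
      set t := j + 1 with htdef
      by_cases hqt : q ^ t ≤ n + 2
      · -- nontrivial term
        have hqt2 : 2 ≤ q ^ t := le_trans hq2 (Nat.le_self_pow (by omega) q |>.trans (le_refl _))
        obtain ⟨m, hm⟩ : ∃ m, q ^ t = m + 2 := ⟨q ^ t - 2, by omega⟩
        have hbound := psi_pow_coeff_bound p q hp.one_lt K hpK Ψ hc0 (J - t) m (n + 2)
          (fun k hk => IH k hk (J - t))
        rw [← hm] at hbound
        have hcast : ((m:ℤ)+2) = (q:ℤ)^t := by exact_mod_cast hm.symm
        rw [hcast] at hbound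
        have hterm : ‖((p:K))^(t * (n + 2 - 1)) * ((coeff (n+2) (Ψ ^ q ^ t) : ℤ) : K)‖
            ≤ (p:ℝ) ^ (-((t * (n + 2 - 1) : ℕ) : ℤ) +
              ((q:ℤ)^t * (((J-t:ℕ):ℤ) * (q:ℤ)^(J-t) + ((J-t:ℕ):ℤ)) - ((J-t:ℕ):ℤ) * ((n+2:ℕ):ℤ))) := by
          rw [norm_mul, hnormpow, zpow_add₀ (ne_of_gt hp0)]
          exact mul_le_mul_of_nonneg_left hbound (zpow_pos hp0 _).le
        refine le_trans hterm ?_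
        apply zpow_le_zpow_right₀ hpR.le
        have hek := exp_key q t J (n+2) hq2 (by omega) (by omega)
        push_cast at hek ⊢
        linarith
      · have : coeff (n+2) (Ψ ^ q ^ t) = 0 := coeff_pow_eq_zero_of_lt Ψ hc0 (n := n+2) (m := q^t) (by omega)
        rw [this]
        simp only [Int.cast_zero, mul_zero, norm_zero]
        positivity

theorem psi_pow_coeff_bound_all (p q : ℕ) (Ψ : PowerSeries ℤ) (K : Type) [NormedField K]
    (hp : p.Prime) (hq2 : 2 ≤ q) [IsUltrametricDist K]
    (hpK : ‖(p : K)‖ = (p : ℝ)⁻¹) (hΨ : IsPsi p q Ψ)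
    (m n J : ℕ) :
    ‖((coeff n (Ψ ^ m) : ℤ) : K)‖ ≤ (p : ℝ) ^ ((m : ℤ) * (J * q ^ J + J) - J * n) := by
  have hpR : (1:ℝ) < (p:ℝ) := by exact_mod_cast hp.one_lt
  have hp0 : (0:ℝ) < (p:ℝ) := by linarith
  match m with
  | 0 =>
    rw [pow_zero, coeff_one]
    rcases eq_or_ne n 0 with h | h
    · subst h; simp
    · rw [if_neg h]
      simp only [Int.cast_zero, norm_zero]
      positivity
  | 1 =>
    rw [pow_one]
    have := psi_coeff_norm_bound p q Ψ K hp hq2 hpK hΨ n J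
    refine le_trans this (zpow_le_zpow_right₀ hpR.le (by push_cast; linarith))
  | (m+2) =>
    have := psi_pow_coeff_bound p q hp.one_lt K hpK Ψ hΨ.1 J m n (fun k _ => psi_coeff_norm_bound p q Ψ K hp hq2 hpK hΨ k J)
    refine le_trans this (zpow_le_zpow_right₀ hpR.le (by push_cast; linarith))

theorem psi_pow_summable (p : ℕ) (Ψ : PowerSeries ℤ) (K : Type) [NormedField K] (q : ℕ) (hp : p.Prime) (hq2 : 2 ≤ q) (hΨ : IsPsi p q Ψ) [IsUltrametricDist K]
    (hpK : ‖(p : K)‖ = (p : ℝ)⁻¹) (x : K) (N : ℕ) (hx : ‖x‖ ≤ (p:ℝ) ^ (N:ℤ)) (m : ℕ) :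
    Summable (fun n => ‖((coeff n (Ψ ^ m) : ℤ) : K) * x ^ n‖) := by
  have hpR : (1:ℝ) < (p:ℝ) := by exact_mod_cast hp.one_lt
  have hp0 : (0:ℝ) < (p:ℝ) := by linarith
  set J := N + 1 with hJ
  set C : ℝ := (p:ℝ) ^ ((m : ℤ) * (J * q ^ J + J)) with hC
  have hbound : ∀ n : ℕ, ‖((coeff n (Ψ ^ m) : ℤ) : K) * x ^ n‖ ≤ C * ((p:ℝ)⁻¹) ^ n := by
    intro n
    rw [norm_mul, norm_pow]
    have h1 := psi_pow_coeff_bound_all p q Ψ K hp hq2 hpK hΨ m n J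
    have h2 : ‖x‖ ^ n ≤ ((p:ℝ) ^ (N:ℤ)) ^ n := pow_le_pow_left₀ (norm_nonneg _) hx n
    have h3 : ((p:ℝ) ^ (N:ℤ)) ^ n = (p:ℝ) ^ ((N:ℤ) * n) := by
      rw [← zpow_natCast ((p:ℝ) ^ (N:ℤ)) n, ← zpow_mul]
    have h4 : C * ((p:ℝ)⁻¹) ^ n = (p:ℝ) ^ (((m : ℤ) * (J * q ^ J + J)) + (-(n:ℤ))) := by
      rw [zpow_add₀ (ne_of_gt hp0), hC, zpow_neg, zpow_natCast, inv_pow]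
    rw [h4]
    calc ‖((coeff n (Ψ ^ m) : ℤ) : K)‖ * ‖x‖ ^ n
        ≤ (p:ℝ) ^ ((m : ℤ) * (J * q ^ J + J) - J * n) * (p:ℝ) ^ ((N:ℤ) * n) := by
          apply mul_le_mul h1 (le_trans h2 (le_of_eq h3)) (by positivity) (zpow_pos hp0 _).le
      _ ≤ _ := by
          rw [← zpow_add₀ (ne_of_gt hp0)]
          apply zpow_le_zpow_right₀ hpR.le
          have : (J:ℤ) = (N:ℤ) + 1 := by exact_mod_cast hJ
          nlinarith [this]
  apply Summable.of_nonneg_of_le (fun n => norm_nonneg _) hbound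
  apply Summable.mul_left
  apply summable_geometric_of_lt_one (by positivity)
  exact inv_lt_one_of_one_lt₀ hpR

theorem psi_eval_pow (p : ℕ) (Ψ : PowerSeries ℤ) (K : Type) [NormedField K] (q : ℕ) (hp : p.Prime) (hq2 : 2 ≤ q) (hΨ : IsPsi p q Ψ) [IsUltrametricDist K] [CompleteSpace K]
    (hpK : ‖(p : K)‖ = (p : ℝ)⁻¹) (x : K) (N : ℕ) (hx : ‖x‖ ≤ (p:ℝ) ^ (N:ℤ)) (m : ℕ) :
    (psiEval Ψ x) ^ m = ∑' n : ℕ, ((coeff n (Ψ ^ m) : ℤ) : K) * x ^ n := by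
  induction m with
  | zero =>
    rw [pow_zero]
    rw [show (∑' n : ℕ, ((coeff n (Ψ ^ 0) : ℤ) : K) * x ^ n)
        = ∑' n : ℕ, ((coeff n (1 : PowerSeries ℤ) : ℤ) : K) * x ^ n by rw [pow_zero]]
    rw [tsum_eq_single 0 (by intro n hn; rw [coeff_one, if_neg hn]; simp)]
    simp [coeff_one]
  | succ m ih =>
    rw [pow_succ, ih]
    rw [show psiEval Ψ x = ∑' n : ℕ, ((coeff n Ψ : ℤ) : K) * x ^ n from rfl]
    rw [tsum_mul_tsum_eq_tsum_sum_antidiagonal_of_summable_norm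
      (psi_pow_summable p Ψ K q hp hq2 hΨ hpK x N hx m) (psi_pow_summable p Ψ K q hp hq2 hΨ hpK x N hx 1
        |>.congr (by intro n; rw [pow_one]))]
    congr 1
    funext n
    rw [pow_succ, coeff_mul]
    push_cast
    rw [Finset.sum_mul]
    apply Finset.sum_congr rfl
    intro kl hkl
    have h : kl.1 + kl.2 = n := Finset.HasAntidiagonal.mem_antidiagonal.mp hkl
    rw [← h, pow_add]
    ring

theorem psi_partial_sums_congruence' (p : ℕ) (hp : p.Prime)
    (q : ℕ) (hq2 : 2 ≤ q)
    (Ψ : PowerSeries ℤ) (hΨ : IsPsi p q Ψ)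
    (K : Type) [NormedField K] [CompleteSpace K] [IsUltrametricDist K]
    (hpK : ‖(p : K)‖ = (p : ℝ)⁻¹)
    (a : K) (N : ℕ) (haN : ‖a‖ ≤ (p : ℝ) ^ (N : ℤ)) (i : ℕ) :
    ‖a - ∑ ℓ ∈ Finset.range (N + i + 1),
        ((p : K) ^ ℓ)⁻¹ * (psiEval Ψ ((p : K) ^ ℓ * a)) ^ q ^ ℓ‖ ≤ (p : ℝ) ^ (-(i + 1 : ℤ)) := by
  have hpR : (1:ℝ) < (p:ℝ) := by exact_mod_cast hp.one_lt
  have hp0 : (0:ℝ) < (p:ℝ) := by linarith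
  have hpK0 : (p:K) ≠ 0 := by
    intro h
    rw [h, norm_zero] at hpK
    exact absurd hpK.symm (by positivity)
  have hnormpow : ∀ s : ℕ, ‖(p:K)^s‖ = (p:ℝ) ^ (-(s:ℤ)) := by
    intro s
    rw [norm_pow, hpK, inv_pow, ← zpow_natCast, ← zpow_neg]
  set L := N + i with hL
  -- the evaluation points
  have hxnorm : ∀ ℓ : ℕ, ‖(p:K)^ℓ * a‖ ≤ (p:ℝ) ^ (N:ℤ) := by
    intro ℓ
    rw [norm_mul, hnormpow]
    calc (p:ℝ) ^ (-(ℓ:ℤ)) * ‖a‖ ≤ 1 * ‖a‖ := by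
          apply mul_le_mul_of_nonneg_right _ (norm_nonneg a)
          apply zpow_le_one_of_nonpos₀ hpR.le (by omega)
      _ = ‖a‖ := one_mul _
      _ ≤ _ := haN
  -- F ℓ n
  set A : ℕ → ℕ → ℤ := fun ℓ n => coeff n (Ψ ^ (q ^ ℓ)) with hA
  set F : ℕ → ℕ → K := fun ℓ n =>
    ((p:K)^ℓ)⁻¹ * (((A ℓ n : ℤ) : K) * ((p:K)^ℓ * a) ^ n) with hF
  have hFsummable : ∀ ℓ : ℕ, Summable (F ℓ) := by
    intro ℓ
    apply Summable.mul_left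
    exact (psi_pow_summable p Ψ K q hp hq2 hΨ hpK _ N (hxnorm ℓ) (q ^ ℓ)).of_norm
  have hS : ∀ ℓ ∈ Finset.range (L+1),
      ((p : K) ^ ℓ)⁻¹ * (psiEval Ψ ((p : K) ^ ℓ * a)) ^ q ^ ℓ = ∑' n, F ℓ n := by
    intro ℓ _
    rw [psi_eval_pow p Ψ K q hp hq2 hΨ hpK _ N (hxnorm ℓ) (q ^ ℓ), ← tsum_mul_left]
  rw [Finset.sum_congr rfl hS]
  -- a as a tsum
  set D : ℕ → K := fun n => (if n = 1 then (1:K) else 0) * a ^ n with hD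
  have hDsummable : Summable D := by
    apply summable_of_ne_finset_zero (s := {1})
    intro n hn
    simp only [Finset.mem_singleton] at hn
    simp [hD, if_neg hn]
  have ha_eq : a = ∑' n, D n := by
    rw [tsum_eq_single 1 (by intro n hn; simp [hD, if_neg hn])]
    simp [hD]
  -- exchange sum and tsum
  have hFS : Summable (fun n => ∑ ℓ ∈ Finset.range (L+1), F ℓ n) :=
    summable_sum (fun ℓ _ => hFsummable ℓ)
  rw [← Summable.tsum_finsetSum (fun ℓ _ => hFsummable ℓ)]
  rw [ha_eq, ← Summable.tsum_sub hDsummable hFS]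
  -- bound each term
  apply IsUltrametricDist.norm_tsum_le_of_forall_le_of_nonneg (zpow_pos hp0 _).le
  intro n
  rcases Nat.eq_zero_or_pos n with rfl | hn1
  · -- n = 0 : everything vanishes
    have hD0 : D 0 = 0 := by simp [hD]
    have hF0 : ∀ ℓ ∈ Finset.range (L+1), F ℓ 0 = 0 := by
      intro ℓ _
      have : A ℓ 0 = 0 := coeff_pow_eq_zero_of_lt Ψ hΨ.1 (pow_pos (by omega : 0 < q) ℓ)
      simp [hF, this]
    rw [hD0, Finset.sum_congr rfl hF0]
    simp
    positivity
  · -- n ≥ 1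
    -- simplify F ℓ n
    have hFsimp : ∀ ℓ : ℕ, F ℓ n = ((p:K) ^ (ℓ * (n-1)) * ((A ℓ n : ℤ) : K)) * a ^ n := by
      intro ℓ
      have hsplit : (p:K) ^ (ℓ * n) = (p:K)^ℓ * (p:K) ^ (ℓ * (n-1)) := by
        rw [← pow_add]
        congr 1
        cases n with
        | zero => omega
        | succ m => simp [Nat.mul_succ]; ring
      simp only [hF]
      rw [mul_pow, ← pow_mul, hsplit]
      field_simp
    rw [Finset.sum_congr rfl (fun ℓ _ => hFsimp ℓ), ← Finset.sum_mul]
    -- the K-version of the coefficient identity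
    have hidK : (∑ j ∈ Finset.range (n + 1), (p:K) ^ (j * (n - 1)) * ((A j n : ℤ) : K))
        = if n = 1 then 1 else 0 := by
      have h := congrArg (fun z : ℤ => (z : K)) (psi_int_identity p q hp Ψ hΨ n hn1)
      simp only [apply_ite (fun z : ℤ => (z : K))] at h
      push_cast at h
      simp only [hA]
      convert h using 2
    set g : ℕ → K := fun j => (p:K) ^ (j * (n - 1)) * ((A j n : ℤ) : K) with hg
    rcases le_or_gt n L with hnL | hnL
    · -- n ≤ L : the term vanishes
      have hsum_eq : ∑ ℓ ∈ Finset.range (n+1), g ℓ = ∑ ℓ ∈ Finset.range (L+1), g ℓ := by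
        apply Finset.sum_subset (Finset.range_subset_range.mpr (by omega))
        intro ℓ _ hℓ
        rw [Finset.mem_range, not_lt] at hℓ
        have h2l : ℓ < 2 ^ ℓ := Nat.lt_two_pow_self
        have h2q : 2 ^ ℓ ≤ q ^ ℓ := Nat.pow_le_pow_left hq2 ℓ
        have : A ℓ n = 0 := coeff_pow_eq_zero_of_lt Ψ hΨ.1 (by omega)
        simp [hg, this]
      rw [show D n = (if n = 1 then (1:K) else 0) * a ^ n from rfl, ← hidK, hsum_eq]
      simp only [sub_self]
      rw [norm_zero]
      positivity
    · -- L < n : estimate the tail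
      rw [show D n = (if n = 1 then (1:K) else 0) * a ^ n from rfl, ← hidK, ← sub_mul,
        ← Finset.sum_Ico_eq_sub _ (by omega : L + 1 ≤ n + 1), Finset.sum_mul]
      apply IsUltrametricDist.norm_sum_le_of_forall_le_of_nonneg (zpow_pos hp0 _).le
      intro ℓ hℓ
      rw [Finset.mem_Ico] at hℓ
      by_cases hq_le : q ^ ℓ ≤ n
      · have hterm : ‖g ℓ * a ^ n‖
            ≤ (p:ℝ) ^ (-((ℓ * (n-1) : ℕ) : ℤ)) * (1 * ((p:ℝ) ^ ((N:ℤ) * n))) := by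
          rw [hg]
          simp only []
          rw [mul_assoc, norm_mul, hnormpow]
          apply mul_le_mul_of_nonneg_left _ (zpow_pos hp0 _).le
          rw [norm_mul, norm_pow]
          apply mul_le_mul (IsUltrametricDist.norm_intCast_le_one K _)
          · calc ‖a‖ ^ n ≤ ((p:ℝ) ^ (N:ℤ)) ^ n := pow_le_pow_left₀ (norm_nonneg _) haN n
              _ = (p:ℝ) ^ ((N:ℤ) * n) := by
                  rw [← zpow_natCast ((p:ℝ) ^ (N:ℤ)) n, ← zpow_mul]
          · positivity
          · exact zero_le_one
        refine le_trans hterm ?_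
        rw [one_mul, ← zpow_add₀ (ne_of_gt hp0)]
        apply zpow_le_zpow_right₀ hpR.le
        have hek := exp_key2 q N i ℓ n hq2 (by omega) hq_le
        have hcast : ((ℓ * (n-1) : ℕ) : ℤ) = (ℓ:ℤ) * ((n:ℤ) - 1) := by
          push_cast [Nat.cast_sub hn1]
          ring
        rw [hcast]
        linarith
      · have : A ℓ n = 0 := coeff_pow_eq_zero_of_lt Ψ hΨ.1 (by omega)
        simp only [hg, this, Int.cast_zero, mul_zero, zero_mul, norm_zero]
        positivity


end AuxLemmas

/-- for every `a ∈ ℚ_q` and `i ≥ 0`,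
`a ≡ ∑_{ℓ=0}^{-v_p(a)+i} p^{-ℓ} Ψ_q(p^ℓ a)^{q^ℓ} (mod p^{i+1} ℤ_q)`. Here `ℚ_q` is
modelled as a complete nonarchimedean normed field `K` with `‖p‖ = p⁻¹`, value group
`p^ℤ` and residue field contained in `𝔽_q`; `-v_p(a) ≤ N` is expressed by
`‖a‖ ≤ p^N` (including any further terms, which only sharpens the congruence), and
congruence `mod p^{i+1} ℤ_q` means the difference has norm `≤ p^{-(i+1)}`. -/
theorem psi_partial_sums_congruence (p f : ℕ) (hp : p.Prime) (hf : 0 < f)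
    (q : ℕ) (hq : q = p ^ f)
    (Ψ : PowerSeries ℤ) (hΨ : IsPsi p q Ψ)
    (K : Type) [NormedField K] [CompleteSpace K] (hna : IsUltrametricDist K)
    (hpK : ‖(p : K)‖ = (p : ℝ)⁻¹)
    (hdisc : ∀ x : K, x ≠ 0 → ∃ m : ℤ, ‖x‖ = (p : ℝ) ^ m)
    (hres : ∀ x : K, ‖x‖ ≤ 1 → ‖x ^ q - x‖ ≤ (p : ℝ)⁻¹)
    (a : K) (N : ℕ) (haN : ‖a‖ ≤ (p : ℝ) ^ (N : ℤ)) (i : ℕ) :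
    ‖a - ∑ ℓ ∈ Finset.range (N + i + 1),
        ((p : K) ^ ℓ)⁻¹ * (psiEval Ψ ((p : K) ^ ℓ * a)) ^ q ^ ℓ‖ ≤ (p : ℝ) ^ (-(i + 1 : ℤ)) := by
  haveI := hna
  have hq2 : 2 ≤ q := by
    rw [hq]
    calc 2 ≤ p := hp.two_le
      _ ≤ p ^ f := Nat.le_self_pow hf.ne' p
  exact psi_partial_sums_congruence' p hp q hq2 Ψ hΨ K hpK a N haN i
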